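/- If a graph contains two cherries (u1, u2, v) and (u3, u4, w) with {u1, u2, v} ∩ {u3, u4, w} = ∅, then the graph admits two non-trivial automorphisms with disjoint supports. -/
import Mathlib


open SimpleGraph

def IsCherry {V : Type*} (G : SimpleGraph V) (u₁ u₂ v : V) : Prop :=
  u₁ ≠ u₂ ∧ u₁ ≠ v ∧ u₂ ≠ v ∧ G.Adj u₁ v ∧ G.Adj u₂ v ∧
    (G.neighborSet u₁).ncard = 1 ∧ (G.neighborSet u₂).ncard = 1 ∧ (G.neighborSet v).ncard = 3

lemma cherry_nbhd {V : Type*} {G : SimpleGraph V} {u v : V}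
    (hadj : G.Adj u v) (h : (G.neighborSet u).ncard = 1) :
    G.neighborSet u = {v} := by
  obtain ⟨a, ha⟩ := Set.ncard_eq_one.mp h
  have : v ∈ G.neighborSet u := hadj
  rw [ha] at this ⊢
  simp_all

lemma cherry_swap_adj {V : Type*} [DecidableEq V] {G : SimpleGraph V} {u₁ u₂ v : V}
    (h : IsCherry G u₁ u₂ v) {a b : V} (hab : G.Adj a b) :
    G.Adj (Equiv.swap u₁ u₂ a) (Equiv.swap u₁ u₂ b) := by
  obtain ⟨h12, h1v, h2v, ha1, ha2, hn1, hn2, hnv⟩ := h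
  have n1 := cherry_nbhd ha1 hn1
  have n2 := cherry_nbhd ha2 hn2
  have key : ∀ x, G.Adj u₁ x ↔ x = v := by
    intro x
    constructor
    · intro hx; have : x ∈ G.neighborSet u₁ := hx; rw [n1] at this; exact this
    · rintro rfl; exact ha1
  have key2 : ∀ x, G.Adj u₂ x ↔ x = v := by
    intro x
    constructor
    · intro hx; have : x ∈ G.neighborSet u₂ := hx; rw [n2] at this; exact this
    · rintro rfl; exact ha2
  have hvfix : Equiv.swap u₁ u₂ v = v :=
    Equiv.swap_apply_of_ne_of_ne (Ne.symm h1v) (Ne.symm h2v)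
  rcases eq_or_ne a u₁ with rfl | ha1'
  · obtain rfl := (key b).mp hab
    rw [Equiv.swap_apply_left, hvfix]; exact ha2
  rcases eq_or_ne a u₂ with rfl | ha2'
  · obtain rfl := (key2 b).mp hab
    rw [Equiv.swap_apply_right, hvfix]; exact ha1
  rw [Equiv.swap_apply_of_ne_of_ne ha1' ha2']
  rcases eq_or_ne b u₁ with rfl | hb1'
  · obtain rfl := (key a).mp hab.symm
    rw [Equiv.swap_apply_left]; exact ha2.symm
  rcases eq_or_ne b u₂ with rfl | hb2'
  · obtain rfl := (key2 a).mp hab.symm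
    rw [Equiv.swap_apply_right]; exact ha1.symm
  rw [Equiv.swap_apply_of_ne_of_ne hb1' hb2']
  exact hab

noncomputable def cherryIso {V : Type*} {G : SimpleGraph V} {u₁ u₂ v : V}
    (h : IsCherry G u₁ u₂ v) : G ≃g G :=
  letI := Classical.decEq V
  {
  toEquiv := Equiv.swap u₁ u₂
  map_rel_iff' := by
    intro a b
    constructor
    · intro hab
      have := cherry_swap_adj h hab
      simpa using this
    · exact cherry_swap_adj h }

theorem two_disjoint_cherries_give_disjoint_automorphisms {V : Type*}
    (G : SimpleGraph V) (u₁ u₂ v u₃ u₄ w : V)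
    (h₁ : IsCherry G u₁ u₂ v) (h₂ : IsCherry G u₃ u₄ w)
    (hdisj : ({u₁, u₂, v} : Set V) ∩ {u₃, u₄, w} = ∅) :
    ∃ σ τ : G ≃g G, (∃ x, σ x ≠ x) ∧ (∃ x, τ x ≠ x) ∧
      {x | σ x ≠ x} ∩ {x | τ x ≠ x} = ∅ := by
  classical
  refine ⟨cherryIso h₁, cherryIso h₂, ⟨u₁, ?_⟩, ⟨u₃, ?_⟩, ?_⟩
  · show Equiv.swap u₁ u₂ u₁ ≠ u₁
    rw [Equiv.swap_apply_left]; exact h₁.1.symm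
  · show Equiv.swap u₃ u₄ u₃ ≠ u₃
    rw [Equiv.swap_apply_left]; exact h₂.1.symm
  · ext x
    simp only [Set.mem_inter_iff, Set.mem_setOf_eq, Set.mem_empty_iff_false, iff_false,
      not_and]
    intro hx hy
    apply hy
    show Equiv.swap u₃ u₄ x = x
    have hx1 : x = u₁ ∨ x = u₂ := by
      by_contra hc
      push_neg at hc
      exact hx (Equiv.swap_apply_of_ne_of_ne hc.1 hc.2)
    have hmem : x ∈ ({u₁, u₂, v} : Set V) := by
      rcases hx1 with rfl | rfl <;> simp
    have hdisj' := Set.eq_empty_iff_forall_notMem.mp hdisj x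
    have hx3 : x ≠ u₃ := by
      intro h; exact hdisj' ⟨hmem, by simp [h]⟩
    have hx4 : x ≠ u₄ := by
      intro h; exact hdisj' ⟨hmem, by simp [h]⟩
    exact Equiv.swap_apply_of_ne_of_ne hx3 hx4
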